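/- For every real c > 0 and every s ∈ (0, 1], setting k_n = ⌊c·n^s⌋, one has, as n → ∞: ln( binom(n², k_n) / (k_n!·(k_n+1)!) ) = c(2−3s)·n^s·ln n + 3c(1 − ln c)·n^s + o(n^s). (This quantity is the expected number of convex chains with k_n vertices among n² independent uniform points of the square [0,n]², since k points uniform in [0,1]² form with (0,0) and (1,1) a convex chain with probability 1/(k!(k+1)!).) -/

import Mathlib

open Real Filter Asymptotics
set_option maxHeartbeats 4000000

lemma log_factorial_stirling (k : ℕ) (hk : 1 ≤ k) :
    Real.log (Nat.factorial k) =
      Real.log (Stirling.stirlingSeq k) + Real.log (2 * k) / 2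
        + ((k : ℝ) * Real.log k - k) := by
  have hk0 : (0:ℝ) < k := by exact_mod_cast hk
  have h2k : (0:ℝ) < 2 * k := by positivity
  rw [Stirling.stirlingSeq]
  rw [Real.log_div (by positivity) (by positivity), Real.log_mul (by positivity) (by positivity),
    Real.log_pow, Real.log_div (by positivity) (by positivity), Real.log_exp,
    Real.log_sqrt (le_of_lt h2k)]
  ring

/-- For `c > 0` and `s ∈ (0,1]`, with `k_n = ⌊c·n^s⌋`, the expected number of convex chains
with `k_n` vertices among `n²` independent uniform points of `[0,n]²` satisfies
`ln(binom(n², k_n)/(k_n!·(k_n+1)!)) = c(2−3s)·n^s·ln n + 3c(1−ln c)·n^s + o(n^s)`. -/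
theorem statement19 (c s : ℝ) (hc : 0 < c) (hs : s ∈ Set.Ioc (0:ℝ) 1) :
    (fun n : ℕ =>
        Real.log ((Nat.choose (n ^ 2) ⌊c * (n : ℝ) ^ s⌋₊ : ℝ) /
            ((Nat.factorial ⌊c * (n : ℝ) ^ s⌋₊ : ℝ) *
              (Nat.factorial (⌊c * (n : ℝ) ^ s⌋₊ + 1) : ℝ)))
          - (c * (2 - 3 * s) * (n : ℝ) ^ s * Real.log n
              + 3 * c * (1 - Real.log c) * (n : ℝ) ^ s))
      =o[atTop] (fun n : ℕ => (n : ℝ) ^ s) := by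
  obtain ⟨hs0, hs1⟩ := hs
  set k : ℕ → ℕ := fun n => ⌊c * (n : ℝ) ^ s⌋₊ with hkdef
  have hke : ∀ n : ℕ, ⌊c * (n : ℝ) ^ s⌋₊ = k n := fun n => by rw [hkdef]
  simp only [hke]
  -- basic tendsto facts
  have hns : Tendsto (fun n : ℕ => (n : ℝ) ^ s) atTop atTop :=
    (tendsto_rpow_atTop hs0).comp tendsto_natCast_atTop_atTop
  have hxt : Tendsto (fun n : ℕ => c * (n : ℝ) ^ s) atTop atTop := hns.const_mul_atTop hc
  have hkt : Tendsto (fun n : ℕ => k n) atTop atTop := tendsto_nat_floor_atTop.comp hxt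
  -- little-o facts about comparison functions
  have ho1 : (fun _ : ℕ => (1 : ℝ)) =o[atTop] (fun n : ℕ => (n : ℝ) ^ s) := by
    refine isLittleO_const_left.2 (Or.inr ?_)
    have := tendsto_abs_atTop_atTop.comp hns
    simpa [Function.comp_def, Real.norm_eq_abs] using this
  have holog : (fun n : ℕ => Real.log n) =o[atTop] (fun n : ℕ => (n : ℝ) ^ s) :=
    (isLittleO_log_rpow_atTop hs0).comp_tendsto tendsto_natCast_atTop_atTop
  have hoL : (fun n : ℕ => 1 + Real.log n) =o[atTop] (fun n : ℕ => (n : ℝ) ^ s) :=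
    ho1.add holog
  have hopow : (fun n : ℕ => (n : ℝ) ^ (2 * s - 2)) =o[atTop] (fun n : ℕ => (n : ℝ) ^ s) := by
    rw [isLittleO_iff_tendsto' ?h0]
    case h0 =>
      filter_upwards [eventually_gt_atTop 0] with n hn h
      have hn0 : (0:ℝ) < n := by exact_mod_cast hn
      exact absurd h (by positivity)
    have h1 : Tendsto (fun n : ℕ => (n : ℝ) ^ (s - 2)) atTop (nhds 0) := by
      have := (tendsto_rpow_neg_atTop (y := 2 - s) (by linarith)).comp
        tendsto_natCast_atTop_atTop
      simpa [Function.comp_def, neg_sub] using this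
    refine h1.congr' ?_
    filter_upwards [eventually_gt_atTop 0] with n hn
    have hn0 : (0:ℝ) < n := by exact_mod_cast hn
    rw [eq_div_iff (by positivity), ← Real.rpow_add hn0]
    congr 1
    ring
  -- Stirling constant
  have hsp : (0:ℝ) < Real.sqrt π := Real.sqrt_pos.2 Real.pi_pos
  have hstl : Tendsto (fun n : ℕ => Real.log (Stirling.stirlingSeq (k n))) atTop
      (nhds (Real.log (Real.sqrt π))) :=
    ((Real.continuousAt_log hsp.ne').tendsto.comp Stirling.tendsto_stirlingSeq_sqrt_pi).comp hkt
  obtain ⟨C0, hC0, hstb⟩ : ∃ C0 : ℝ, 0 ≤ C0 ∧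
      ∀ᶠ n : ℕ in atTop, |Real.log (Stirling.stirlingSeq (k n))| ≤ C0 := by
    refine ⟨|Real.log (Real.sqrt π)| + 1, by positivity, ?_⟩
    filter_upwards [hstl.eventually_mem (Metric.ball_mem_nhds _ one_pos)] with n hn
    rw [Metric.mem_ball, Real.dist_eq] at hn
    have := abs_sub_abs_le_abs_sub (Real.log (Stirling.stirlingSeq (k n)))
      (Real.log (Real.sqrt π))
    linarith
  -- bundle of basic eventual facts
  have hbasic : ∀ᶠ n : ℕ in atTop,
      1 ≤ k n ∧ (k n : ℝ) ≤ c * (n:ℝ)^s ∧ c * (n:ℝ)^s < (k n : ℝ) + 1 ∧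
      2 * k n ≤ n ^ 2 ∧ (1:ℝ) ≤ (n:ℝ) ∧ (1:ℝ) ≤ c * (n:ℝ)^s := by
    filter_upwards [hxt.eventually_ge_atTop 1,
      tendsto_natCast_atTop_atTop.eventually_ge_atTop (2*c), eventually_ge_atTop 1]
      with n h1 h2 h3
    have hn1 : (1:ℝ) ≤ (n:ℝ) := by exact_mod_cast h3
    have hn0 : (0:ℝ) < (n:ℝ) := by linarith
    have hx0 : (0:ℝ) ≤ c * (n:ℝ)^s := by positivity
    have hkx : (k n : ℝ) ≤ c * (n:ℝ)^s := Nat.floor_le hx0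
    have hxk : c * (n:ℝ)^s < (k n : ℝ) + 1 := Nat.lt_floor_add_one _
    have hk1 : 1 ≤ k n := Nat.le_floor (by exact_mod_cast h1)
    have hxn : c * (n:ℝ)^s ≤ c * (n:ℝ) := by
      have h := Real.rpow_le_rpow_of_exponent_le hn1 hs1
      rw [Real.rpow_one] at h
      exact mul_le_mul_of_nonneg_left h hc.le
    have h2k : 2 * k n ≤ n ^ 2 := by
      have hr : ((2 * k n : ℕ) : ℝ) ≤ ((n ^ 2 : ℕ) : ℝ) := by
        push_cast
        have hint : 2 * c * (n:ℝ) ≤ (n:ℝ) * (n:ℝ) := mul_le_mul_of_nonneg_right h2 hn0.le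
        linarith only [hkx, hxn, hint]
      exact_mod_cast hr
    exact ⟨hk1, hkx, hxk, h2k, hn1, h1⟩
  -- the descFactorial piece
  set T1 : ℕ → ℝ := fun n =>
    Real.log (Nat.descFactorial (n ^ 2) (k n)) - 2 * (k n : ℝ) * Real.log n with hT1def
  have hT1 : T1 =O[atTop] (fun n : ℕ => (n:ℝ) ^ (2 * s - 2)) := by
    rw [isBigO_iff]
    refine ⟨2 * c ^ 2, ?_⟩
    filter_upwards [hbasic] with n hb
    obtain ⟨hk1, hkx, hxk, h2k, hn1, hx1⟩ := hb
    have hn0 : (0:ℝ) < n := by linarith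
    have hkN : k n ≤ n ^ 2 := by omega
    have hdesc : (Nat.descFactorial (n ^ 2) (k n) : ℝ)
        = (Nat.factorial (k n) : ℝ) * (Nat.choose (n ^ 2) (k n) : ℝ) := by
      exact_mod_cast Nat.descFactorial_eq_factorial_mul_choose _ _
    have hch_pos : (0:ℝ) < (Nat.choose (n ^ 2) (k n) : ℝ) := by
      exact_mod_cast Nat.choose_pos hkN
    have hfact_pos : (0:ℝ) < (Nat.factorial (k n) : ℝ) := by
      exact_mod_cast Nat.factorial_pos (k n)
    have hdesc_pos : (0:ℝ) < (Nat.descFactorial (n ^ 2) (k n) : ℝ) := by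
      rw [hdesc]; positivity
    have hNR : ((n ^ 2 : ℕ) : ℝ) = (n : ℝ) ^ 2 := by push_cast; ring
    have hNpos : (0:ℝ) < ((n ^ 2 : ℕ) : ℝ) := by rw [hNR]; positivity
    have hN1 : (1:ℝ) ≤ ((n ^ 2 : ℕ) : ℝ) := by rw [hNR]; nlinarith
    have hkpos : (0:ℝ) < (k n : ℝ) := by exact_mod_cast hk1
    have h2kR : 2 * (k n : ℝ) ≤ ((n ^ 2 : ℕ) : ℝ) := by exact_mod_cast h2k
    have hlogN : Real.log ((n ^ 2 : ℕ) : ℝ) = 2 * Real.log n := by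
      rw [hNR, Real.log_pow]; norm_num
    -- upper bound
    have hupper : Real.log (Nat.descFactorial (n ^ 2) (k n)) ≤ (k n : ℝ) * Real.log ((n ^ 2 : ℕ) : ℝ) := by
      have h1 : (Nat.descFactorial (n ^ 2) (k n) : ℝ) ≤ ((n ^ 2 : ℕ) : ℝ) ^ (k n) := by
        exact_mod_cast Nat.descFactorial_le_pow (n ^ 2) (k n)
      calc Real.log (Nat.descFactorial (n ^ 2) (k n))
          ≤ Real.log (((n ^ 2 : ℕ) : ℝ) ^ (k n)) := Real.log_le_log hdesc_pos h1
        _ = (k n : ℝ) * Real.log ((n ^ 2 : ℕ) : ℝ) := Real.log_pow _ _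
    -- lower bound
    have hMcast : ((n ^ 2 + 1 - k n : ℕ) : ℝ) = ((n ^ 2 : ℕ) : ℝ) + 1 - (k n : ℝ) := by
      have : k n ≤ n ^ 2 + 1 := by omega
      push_cast [this]
      ring
    set M : ℝ := ((n ^ 2 : ℕ) : ℝ) + 1 - (k n : ℝ) with hMdef
    have hM1 : (1:ℝ) ≤ M := by
      have : (k n : ℝ) ≤ ((n ^ 2 : ℕ) : ℝ) := by exact_mod_cast hkN
      rw [hMdef]; linarith
    have hMpos : (0:ℝ) < M := by linarith
    have hN2M : ((n ^ 2 : ℕ) : ℝ) ≤ 2 * M := by rw [hMdef]; linarith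
    have hlower : (k n : ℝ) * Real.log M ≤ Real.log (Nat.descFactorial (n ^ 2) (k n)) := by
      have h1 : ((n ^ 2 + 1 - k n : ℕ) : ℝ) ^ (k n) ≤ (Nat.descFactorial (n ^ 2) (k n) : ℝ) := by
        exact_mod_cast Nat.pow_sub_le_descFactorial (n ^ 2) (k n)
      have h2 : Real.log (((n ^ 2 + 1 - k n : ℕ) : ℝ) ^ (k n))
          ≤ Real.log (Nat.descFactorial (n ^ 2) (k n)) := by
        refine Real.log_le_log ?_ h1
        rw [hMcast]
        positivity
      rw [Real.log_pow, hMcast] at h2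
      exact h2
    -- log N - log M ≤ 2k/N
    have hNM : Real.log ((n ^ 2 : ℕ) : ℝ) - Real.log M ≤ 2 * (k n : ℝ) / ((n ^ 2 : ℕ) : ℝ) := by
      have l1 : Real.log (((n ^ 2 : ℕ) : ℝ) / M) ≤ ((n ^ 2 : ℕ) : ℝ) / M - 1 :=
        Real.log_le_sub_one_of_pos (by positivity)
      rw [Real.log_div hNpos.ne' hMpos.ne'] at l1
      have l2 : ((n ^ 2 : ℕ) : ℝ) / M - 1 = (((n ^ 2 : ℕ) : ℝ) - M) / M := by
        field_simp
      have l3 : (((n ^ 2 : ℕ) : ℝ) - M) / M ≤ 2 * (k n : ℝ) / ((n ^ 2 : ℕ) : ℝ) := by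
        rw [div_le_div_iff₀ hMpos hNpos]
        have : ((n ^ 2 : ℕ) : ℝ) - M = (k n : ℝ) - 1 := by rw [hMdef]; ring
        rw [this]
        nlinarith [mul_le_mul_of_nonneg_left hN2M hkpos.le]
      linarith
    -- |T1 n| ≤ 2 k^2 / N
    have h6 : (k n : ℝ) * Real.log ((n ^ 2 : ℕ) : ℝ) = 2 * (k n : ℝ) * Real.log n := by
      rw [hlogN]; ring
    have habs : |T1 n| ≤ 2 * (k n : ℝ) ^ 2 / ((n ^ 2 : ℕ) : ℝ) := by
      have hup : T1 n ≤ 0 := by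
        simp only [hT1def]
        linarith [hupper, h6]
      have hlo : -(2 * (k n : ℝ) ^ 2 / ((n ^ 2 : ℕ) : ℝ)) ≤ T1 n := by
        simp only [hT1def]
        have h4 : (k n : ℝ) * Real.log ((n ^ 2 : ℕ) : ℝ) - (k n : ℝ) * Real.log M
            ≤ 2 * (k n : ℝ) ^ 2 / ((n ^ 2 : ℕ) : ℝ) := by
          have h5a := mul_le_mul_of_nonneg_left hNM hkpos.le
          have h5b : (k n : ℝ) * (2 * (k n : ℝ) / ((n ^ 2 : ℕ) : ℝ))
              = 2 * (k n : ℝ) ^ 2 / ((n ^ 2 : ℕ) : ℝ) := by ring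
          linarith only [h5a, h5b]
        linarith [hlower, h4, h6]
      rw [abs_le]
      constructor <;> [exact hlo; linarith]
    -- 2 k^2 / N ≤ 2 c^2 n^(2s-2)
    have hfin : 2 * (k n : ℝ) ^ 2 / ((n ^ 2 : ℕ) : ℝ) ≤ 2 * c ^ 2 * (n:ℝ) ^ (2 * s - 2) := by
      have hk2 : (k n : ℝ) ^ 2 ≤ (c * (n:ℝ)^s) ^ 2 := pow_le_pow_left₀ hkpos.le hkx 2
      have hrp : (n:ℝ) ^ (2 * s - 2) = (n:ℝ)^s * (n:ℝ)^s / ((n:ℝ) ^ (2:ℕ)) := by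
        rw [← Real.rpow_natCast (n:ℝ) 2, ← Real.rpow_add hn0, ← Real.rpow_sub hn0]
        congr 1
        push_cast
        ring
      have e2 : 2 * (c * (n:ℝ)^s) ^ 2 / ((n ^ 2 : ℕ) : ℝ) = 2 * c ^ 2 * (n:ℝ) ^ (2 * s - 2) := by
        rw [hrp, hNR]
        ring
      rw [← e2]
      gcongr
    have hnorm : ‖(n:ℝ) ^ (2 * s - 2)‖ = (n:ℝ) ^ (2 * s - 2) := by
      rw [Real.norm_eq_abs, abs_of_nonneg (Real.rpow_nonneg hn0.le _)]
    rw [Real.norm_eq_abs, hnorm]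
    calc |T1 n| ≤ 2 * (k n : ℝ) ^ 2 / ((n ^ 2 : ℕ) : ℝ) := habs
      _ ≤ 2 * c ^ 2 * (n:ℝ) ^ (2 * s - 2) := hfin
  -- the remainder piece
  have hR : (fun n : ℕ =>
      (Real.log ((Nat.choose (n ^ 2) (k n) : ℝ) /
          ((Nat.factorial (k n) : ℝ) * (Nat.factorial (k n + 1) : ℝ)))
        - (c * (2 - 3 * s) * (n : ℝ) ^ s * Real.log n
            + 3 * c * (1 - Real.log c) * (n : ℝ) ^ s)) - T1 n)
      =O[atTop] (fun n : ℕ => 1 + Real.log n) := by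
    rw [isBigO_iff]
    refine ⟨3 * C0 + 6 * |Real.log c| + 12, ?_⟩
    filter_upwards [hbasic, hstb] with n hb hst
    obtain ⟨hk1, hkx, hxk, h2k, hn1, hx1⟩ := hb
    have hn0 : (0:ℝ) < n := by linarith
    have hkpos : (0:ℝ) < (k n : ℝ) := by exact_mod_cast hk1
    have hK1 : (1:ℝ) ≤ (k n : ℝ) := by exact_mod_cast hk1
    have hkN : k n ≤ n ^ 2 := by omega
    have hlogn0 : 0 ≤ Real.log n := Real.log_nonneg hn1
    have hlogx : Real.log (c * (n:ℝ)^s) = Real.log c + s * Real.log n := by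
      rw [Real.log_mul hc.ne' (by positivity), Real.log_rpow hn0]
    have hch_pos : (0:ℝ) < (Nat.choose (n ^ 2) (k n) : ℝ) := by
      exact_mod_cast Nat.choose_pos hkN
    have hfact_pos : (0:ℝ) < (Nat.factorial (k n) : ℝ) := by
      exact_mod_cast Nat.factorial_pos (k n)
    have hfact1_pos : (0:ℝ) < (Nat.factorial (k n + 1) : ℝ) := by
      exact_mod_cast Nat.factorial_pos (k n + 1)
    have hdesc : (Nat.descFactorial (n ^ 2) (k n) : ℝ)
        = (Nat.factorial (k n) : ℝ) * (Nat.choose (n ^ 2) (k n) : ℝ) := by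
      exact_mod_cast Nat.descFactorial_eq_factorial_mul_choose _ _
    have hL : Real.log ((Nat.choose (n ^ 2) (k n) : ℝ)
          / ((Nat.factorial (k n) : ℝ) * (Nat.factorial (k n + 1) : ℝ)))
        = Real.log (Nat.descFactorial (n ^ 2) (k n))
          - 2 * Real.log (Nat.factorial (k n)) - Real.log (Nat.factorial (k n + 1)) := by
      rw [Real.log_div hch_pos.ne' (by positivity),
        Real.log_mul hfact_pos.ne' hfact1_pos.ne']
      have h := congrArg Real.log hdesc
      rw [Real.log_mul hfact_pos.ne' hch_pos.ne'] at h
      linarith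
    have hf1 : Real.log (Nat.factorial (k n + 1) : ℝ)
        = Real.log ((k n : ℝ) + 1) + Real.log (Nat.factorial (k n)) := by
      rw [Nat.factorial_succ]
      push_cast
      rw [Real.log_mul (by positivity) hfact_pos.ne']
    have hfs := log_factorial_stirling (k n) hk1
    -- the key identity
    have hform : (Real.log ((Nat.choose (n ^ 2) (k n) : ℝ) /
          ((Nat.factorial (k n) : ℝ) * (Nat.factorial (k n + 1) : ℝ)))
        - (c * (2 - 3 * s) * (n : ℝ) ^ s * Real.log n
            + 3 * c * (1 - Real.log c) * (n : ℝ) ^ s)) - T1 n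
        = -3 * (Real.log (Stirling.stirlingSeq (k n)) + Real.log (2 * (k n : ℝ)) / 2)
          - Real.log ((k n : ℝ) + 1)
          + 2 * ((k n : ℝ) - c * (n:ℝ)^s) * Real.log n
          + 3 * ((k n : ℝ) - c * (n:ℝ)^s)
          - 3 * ((k n : ℝ) * Real.log (k n) - (c * (n:ℝ)^s) * Real.log (c * (n:ℝ)^s)) := by
      simp only [hT1def]
      rw [hL, hf1, hfs, hlogx]
      ring
    rw [hform]
    -- now bound each term
    have hl2 : Real.log 2 ≤ 1 := by
      have := Real.log_two_lt_d9
      linarith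
    have habsc : 0 ≤ |Real.log c| := abs_nonneg _
    have hlogc_le : Real.log c ≤ |Real.log c| := le_abs_self _
    have hlogx_nonneg : 0 ≤ Real.log (c * (n:ℝ)^s) := Real.log_nonneg hx1
    have hlogx_le : Real.log (c * (n:ℝ)^s) ≤ |Real.log c| + Real.log n := by
      rw [hlogx]
      have : s * Real.log n ≤ 1 * Real.log n := mul_le_mul_of_nonneg_right hs1 hlogn0
      linarith
    have hlogK_le : Real.log (k n : ℝ) ≤ Real.log (c * (n:ℝ)^s) :=
      Real.log_le_log hkpos hkx
    have hlogK_nonneg : 0 ≤ Real.log (k n : ℝ) := Real.log_nonneg hK1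
    -- E bound
    have hlog2K : Real.log (2 * (k n : ℝ)) = Real.log 2 + Real.log (k n : ℝ) :=
      Real.log_mul two_ne_zero hkpos.ne'
    -- log (K+1) bound
    have hlogK1_nonneg : 0 ≤ Real.log ((k n : ℝ) + 1) := Real.log_nonneg (by linarith)
    have hlogK1_le : Real.log ((k n : ℝ) + 1)
        ≤ Real.log 2 + |Real.log c| + Real.log n := by
      have h1 : (k n : ℝ) + 1 ≤ 2 * (c * (n:ℝ)^s) := by linarith
      have h2 : Real.log ((k n : ℝ) + 1) ≤ Real.log (2 * (c * (n:ℝ)^s)) :=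
        Real.log_le_log (by linarith) h1
      rw [Real.log_mul two_ne_zero (by positivity)] at h2
      linarith
    -- K - x bounds
    have hKx1 : -1 ≤ (k n : ℝ) - c * (n:ℝ)^s := by linarith
    have hKx2 : (k n : ℝ) - c * (n:ℝ)^s ≤ 0 := by linarith
    have hprod1 : -(Real.log n) ≤ ((k n : ℝ) - c * (n:ℝ)^s) * Real.log n := by
      have e1 : 0 ≤ ((k n : ℝ) - c * (n:ℝ)^s + 1) * Real.log n :=
        mul_nonneg (by linarith) hlogn0
      have e2 : ((k n : ℝ) - c * (n:ℝ)^s + 1) * Real.log n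
          = ((k n : ℝ) - c * (n:ℝ)^s) * Real.log n + Real.log n := by ring
      linarith only [e1, e2]
    have hprod2 : ((k n : ℝ) - c * (n:ℝ)^s) * Real.log n ≤ 0 := by
      have e1 : 0 ≤ (c * (n:ℝ)^s - (k n : ℝ)) * Real.log n :=
        mul_nonneg (by linarith) hlogn0
      have e2 : (c * (n:ℝ)^s - (k n : ℝ)) * Real.log n
          = -(((k n : ℝ) - c * (n:ℝ)^s) * Real.log n) := by ring
      linarith only [e1, e2]
    -- K log K - x log x bounds
    have hdiff_log : Real.log (c * (n:ℝ)^s) - Real.log (k n : ℝ)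
        ≤ (c * (n:ℝ)^s) / (k n : ℝ) - 1 := by
      have h1 : Real.log ((c * (n:ℝ)^s) / (k n : ℝ)) ≤ (c * (n:ℝ)^s) / (k n : ℝ) - 1 :=
        Real.log_le_sub_one_of_pos (by positivity)
      rw [Real.log_div (by positivity) hkpos.ne'] at h1
      exact h1
    have hT6a : 0 ≤ (c * (n:ℝ)^s) * Real.log (c * (n:ℝ)^s) - (k n : ℝ) * Real.log (k n : ℝ) := by
      have e1 := mul_le_mul_of_nonneg_left hlogK_le hkpos.le
      have e2 := mul_le_mul_of_nonneg_right hkx hlogx_nonneg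
      linarith only [e1, e2]
    have hT6b : (c * (n:ℝ)^s) * Real.log (c * (n:ℝ)^s) - (k n : ℝ) * Real.log (k n : ℝ)
        ≤ |Real.log c| + Real.log n + 1 := by
      have hid : (c * (n:ℝ)^s) * Real.log (c * (n:ℝ)^s) - (k n : ℝ) * Real.log (k n : ℝ)
          = ((c * (n:ℝ)^s) - (k n : ℝ)) * Real.log (c * (n:ℝ)^s)
            + (k n : ℝ) * (Real.log (c * (n:ℝ)^s) - Real.log (k n : ℝ)) := by ring
      have hb1 : ((c * (n:ℝ)^s) - (k n : ℝ)) * Real.log (c * (n:ℝ)^s)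
          ≤ Real.log (c * (n:ℝ)^s) := by
        have e1 : 0 ≤ (1 - ((c * (n:ℝ)^s) - (k n : ℝ))) * Real.log (c * (n:ℝ)^s) :=
          mul_nonneg (by linarith) hlogx_nonneg
        have e2 : (1 - ((c * (n:ℝ)^s) - (k n : ℝ))) * Real.log (c * (n:ℝ)^s)
            = Real.log (c * (n:ℝ)^s)
              - ((c * (n:ℝ)^s) - (k n : ℝ)) * Real.log (c * (n:ℝ)^s) := by ring
        linarith only [e1, e2]
      have hb2 : (k n : ℝ) * (Real.log (c * (n:ℝ)^s) - Real.log (k n : ℝ)) ≤ 1 := by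
        have h3 : (k n : ℝ) * ((c * (n:ℝ)^s) / (k n : ℝ) - 1) = (c * (n:ℝ)^s) - (k n : ℝ) := by
          field_simp
        have h4 := mul_le_mul_of_nonneg_left hdiff_log hkpos.le
        linarith only [h3, h4, hxk]
      linarith only [hid, hb1, hb2, hlogx_le]
    -- stirling term
    have hstE : |Real.log (Stirling.stirlingSeq (k n))| ≤ C0 := hst
    obtain ⟨hstE1, hstE2⟩ := abs_le.1 hstE
    have hlog2K_nonneg : 0 ≤ Real.log (2 * (k n : ℝ)) := Real.log_nonneg (by linarith)
    have hlog2K_le : Real.log (2 * (k n : ℝ)) ≤ Real.log 2 + |Real.log c| + Real.log n := by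
      rw [hlog2K]
      linarith
    -- final bound
    have hnorm : ‖1 + Real.log n‖ = 1 + Real.log n := by
      rw [Real.norm_eq_abs, abs_of_nonneg (by linarith)]
    have hp1 : 0 ≤ C0 * Real.log n := mul_nonneg hC0 hlogn0
    have hp2 : 0 ≤ |Real.log c| * Real.log n := mul_nonneg habsc hlogn0
    rw [Real.norm_eq_abs, hnorm, abs_le]
    constructor <;>
      linarith only [hstE1, hstE2, hlog2K_nonneg, hlog2K_le, hlogK1_nonneg, hlogK1_le,
        hKx1, hKx2, hprod1, hprod2, hT6a, hT6b, hlogn0, hC0, hl2, habsc, hp1, hp2]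
  -- assemble
  have hsum := (hT1.trans_isLittleO hopow).add (hR.trans_isLittleO hoL)
  refine hsum.congr' ?_ EventuallyEq.rfl
  filter_upwards with n
  ring
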